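/- With K the 4×4 matrix in 1+2+1 block form [[0,0,1],[0,2σ,0],[1,0,0]] where σ = [[0,1],[1,0]], and J = diag(1, -1, -1, 1), the NV2 transition matrix S_k satisfies K⁻¹ S_k(λ)ᵀ K = S_k(-λ) and S_k(λ)⁻¹ = J S_k(λ) J, and consequently S_k(-λ)ᵀ (KJ) S_k(λ) (KJ)⁻¹ = I₄. -/

import Mathlib

set_option maxHeartbeats 1600000


open Matrix
/-- The NV2 transition matrix `S_k(λ)` with mass `(m, n)` and position `x`,
written out in the 1+2+1 block decomposition. -/
noncomputable def transitionS (m n x l : ℝ) : Matrix (Fin 4) (Fin 4) ℝ :=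
  !![1 - l * (2 * m * n), -2 * l * n * Real.exp (-x), -2 * l * m * Real.exp (-x),
        -l ^ 2 * (2 * m * n) * Real.exp (-2 * x);
     m * Real.exp x, 1, 0, l * m * Real.exp (-x);
     n * Real.exp x, 0, 1, l * n * Real.exp (-x);
     (2 * m * n) * Real.exp (2 * x), 2 * n * Real.exp x, 2 * m * Real.exp x,
        1 + l * (2 * m * n)]

/-- The matrix `K = [[0,0,1],[0,2σ,0],[1,0,0]]` in the 1+2+1 block form,
with `σ = [[0,1],[1,0]]`. -/
def matK : Matrix (Fin 4) (Fin 4) ℝ :=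
  !![0, 0, 0, 1;
     0, 0, 2, 0;
     0, 2, 0, 0;
     1, 0, 0, 0]

/-- The matrix `J = diag(1, -1, -1, 1)`. -/
def matJ : Matrix (Fin 4) (Fin 4) ℝ :=
  !![1, 0, 0, 0;
     0, -1, 0, 0;
     0, 0, -1, 0;
     0, 0, 0, 1]


noncomputable def matKinv : Matrix (Fin 4) (Fin 4) ℝ :=
  !![0, 0, 0, 1;
     0, 0, 1/2, 0;
     0, 1/2, 0, 0;
     1, 0, 0, 0]

lemma hKright : matK * matKinv = 1 := by
  ext i j
  fin_cases i <;> fin_cases j <;>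
    simp [matK, matKinv, Matrix.mul_apply, Fin.sum_univ_four, Matrix.one_apply,
      Matrix.vecHead, Matrix.vecTail]

lemma hKinv : matK⁻¹ = matKinv := inv_eq_right_inv hKright

lemma hKdet : IsUnit matK.det := by
  have : Invertible matK := invertibleOfRightInverse _ _ hKright
  exact Matrix.isUnit_det_of_invertible matK

lemma hexp (x : ℝ) : Real.exp x * Real.exp (-x) = 1 := by
  rw [← Real.exp_add]; simp

lemma claim1 (m n x l : ℝ) :
    matK⁻¹ * (transitionS m n x l)ᵀ * matK = transitionS m n x (-l) := by
  rw [hKinv]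
  have h2 : Real.exp (2*x) = Real.exp x * Real.exp x := by
    rw [← Real.exp_add]; ring_nf
  have h2' : Real.exp (-(2*x)) = Real.exp (-x) * Real.exp (-x) := by
    rw [← Real.exp_add]; ring_nf
  ext i j
  fin_cases i <;> fin_cases j <;>
    simp [matKinv, matK, transitionS, Matrix.mul_apply, Fin.sum_univ_four,
      Matrix.transpose_apply, neg_mul, h2, h2', Matrix.vecHead, Matrix.vecTail,
        Matrix.vecMul, dotProduct] <;> ring

lemma claim2 (m n x l : ℝ) :
    transitionS m n x l * (matJ * transitionS m n x l * matJ) = 1 := by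
  have he := hexp x
  have h2a : Real.exp (2*x) = Real.exp x * Real.exp x := by
    rw [← Real.exp_add]; ring_nf
  have h2b : Real.exp (-(2*x)) = Real.exp (-x) * Real.exp (-x) := by
    rw [← Real.exp_add]; ring_nf
  ext i j
  fin_cases i <;> fin_cases j <;>
    simp [matJ, transitionS, Matrix.mul_apply, Fin.sum_univ_four, Matrix.one_apply,
      h2a, h2b, Matrix.vecHead, Matrix.vecTail, Real.exp_neg] <;>
    (try field_simp) <;> ring

lemma hJJ : matJ * matJ = 1 := by
  ext i j
  fin_cases i <;> fin_cases j <;>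
    simp [matJ, Matrix.mul_apply, Fin.sum_univ_four, Matrix.one_apply,
      Matrix.vecHead, Matrix.vecTail]

theorem transitionS_symmetries (m n x : ℝ) (hm : 0 < m) (hn : 0 < n) :
    (∀ l : ℝ, matK⁻¹ * (transitionS m n x l)ᵀ * matK = transitionS m n x (-l)) ∧
    (∀ l : ℝ, (transitionS m n x l)⁻¹ = matJ * transitionS m n x l * matJ) ∧
    (∀ l : ℝ, (transitionS m n x (-l))ᵀ * (matK * matJ) * transitionS m n x l *
        (matK * matJ)⁻¹ = 1) := by
  have hinv : ∀ l, (transitionS m n x l)⁻¹ = matJ * transitionS m n x l * matJ :=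
    fun l => inv_eq_right_inv (claim2 m n x l)
  refine ⟨claim1 m n x, hinv, fun l => ?_⟩
  have hT : (transitionS m n x (-l))ᵀ = matK * transitionS m n x l * matK⁻¹ := by
    rw [← claim1 m n x l]
    have hKT : matKᵀ = matK := by
      ext i j; fin_cases i <;> fin_cases j <;> rfl
    have hKinvT : (matK⁻¹)ᵀ = matK⁻¹ := by
      rw [hKinv]; ext i j; fin_cases i <;> fin_cases j <;> rfl
    simp [Matrix.transpose_mul, hKT, hKinvT, Matrix.mul_assoc]
  have hKJinv : (matK * matJ)⁻¹ = matJ * matK⁻¹ := by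
    rw [Matrix.mul_inv_rev]
    congr 1
    exact inv_eq_right_inv hJJ
  rw [hT, hKJinv]
  calc matK * transitionS m n x l * matK⁻¹ * (matK * matJ) * transitionS m n x l *
        (matJ * matK⁻¹)
      = matK * (transitionS m n x l * (matJ * transitionS m n x l * matJ)) * matK⁻¹ := by
        rw [show matK * transitionS m n x l * matK⁻¹ * (matK * matJ) =
            matK * transitionS m n x l * (matK⁻¹ * matK) * matJ by
          simp [Matrix.mul_assoc]]
        rw [Matrix.nonsing_inv_mul _ hKdet]
        simp [Matrix.mul_assoc]
    _ = 1 := by rw [claim2 m n x l, Matrix.mul_one, Matrix.mul_nonsing_inv _ hKdet]
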